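/- Let a be a nonzero real number and b a real number. Then the infimum of (ε + 1/(ε·L))·|a·L + b| over all ε > 0 and L ≥ 1 equals: 0 if a·b ≤ −a²; 2·|a + b| if −a² < a·b < a²; and 4·√|a·b| if a·b ≥ a². -/

import Mathlib

private lemma abs_ge_of_sq {x y : ℝ} (hy : 0 ≤ y) (h : y ^ 2 ≤ x ^ 2) : y ≤ |x| := by
  calc y = Real.sqrt (y ^ 2) := (Real.sqrt_sq hy).symm
    _ ≤ Real.sqrt (x ^ 2) := Real.sqrt_le_sqrt h
    _ = |x| := Real.sqrt_sq_eq_abs x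

private lemma sqrt_key {ε L : ℝ} (hε : 0 < ε) (hL : 1 ≤ L) :
    2 / Real.sqrt L ≤ ε + 1 / (ε * L) := by
  have hL0 : (0:ℝ) < L := lt_of_lt_of_le one_pos hL
  have hs : Real.sqrt L ^ 2 = L := Real.sq_sqrt hL0.le
  have hs0 : 0 < Real.sqrt L := Real.sqrt_pos.mpr hL0
  rw [div_le_iff₀ hs0]
  have h1 : 1 / (ε * L) * (ε * L) = 1 := by field_simp
  nlinarith [sq_nonneg (ε * Real.sqrt L - 1), mul_pos hε hL0,
    mul_pos (mul_pos hε hL0) hs0, sq_nonneg (Real.sqrt L)]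

/-- The minimization of `(ε + 1/(εL))·|aL + b|` over `ε > 0`, `L ≥ 1`:
the infimum equals `0` if `ab ≤ −a²`, `2|a + b|` if `−a² < ab < a²`, and
`4√|ab|` if `ab ≥ a²`. -/
theorem weighted_gain_minimization (a b : ℝ) (ha : a ≠ 0) :
    IsGLB {v : ℝ | ∃ ε L : ℝ, 0 < ε ∧ 1 ≤ L ∧ v = (ε + 1 / (ε * L)) * |a * L + b|}
      (if a * b ≤ -a ^ 2 then 0
       else if a * b < a ^ 2 then 2 * |a + b|
       else 4 * Real.sqrt |a * b|) := by
  have ha2 : (0:ℝ) < a ^ 2 := by positivity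
  split_ifs with h1 h2
  · -- ab ≤ -a² : infimum 0, attained at L = -b/a, ε = 1
    apply IsLeast.isGLB
    constructor
    · refine ⟨1, -b / a, one_pos, ?_, ?_⟩
      · have hx : -b / a = -(a * b) / a ^ 2 := by field_simp
        rw [hx, le_div_iff₀ ha2]
        linarith
      · have h0 : a * (-b / a) + b = 0 := by field_simp; ring
        rw [h0, abs_zero, mul_zero]
    · rintro v ⟨ε, L, hε, hL, rfl⟩
      have hL0 : (0:ℝ) < L := lt_of_lt_of_le one_pos hL
      exact mul_nonneg (add_nonneg hε.le (one_div_nonneg.mpr (mul_pos hε hL0).le))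
        (abs_nonneg _)
  · -- -a² < ab < a² : infimum 2|a+b|, attained at ε = L = 1
    apply IsLeast.isGLB
    constructor
    · refine ⟨1, 1, one_pos, le_refl 1, ?_⟩
      norm_num
    · rintro v ⟨ε, L, hε, hL, rfl⟩
      have hL0 : (0:ℝ) < L := lt_of_lt_of_le one_pos hL
      have hs : Real.sqrt L ^ 2 = L := Real.sq_sqrt hL0.le
      have hs0 : 0 < Real.sqrt L := Real.sqrt_pos.mpr hL0
      have hb2 : b ^ 2 < a ^ 2 := by nlinarith
      have hsq : (Real.sqrt L * |a + b|) ^ 2 ≤ (a * L + b) ^ 2 := by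
        rw [mul_pow, hs, sq_abs]
        nlinarith [mul_nonneg (sub_nonneg.mpr hL) (by nlinarith : (0:ℝ) ≤ a ^ 2 * L - b ^ 2)]
      have habs : Real.sqrt L * |a + b| ≤ |a * L + b| :=
        abs_ge_of_sq (mul_nonneg hs0.le (abs_nonneg _)) hsq
      have hA : 2 * |a + b| ≤ 2 / Real.sqrt L * |a * L + b| := by
        rw [div_mul_eq_mul_div, le_div_iff₀ hs0]
        nlinarith
      calc 2 * |a + b| ≤ 2 / Real.sqrt L * |a * L + b| := hA
        _ ≤ (ε + 1 / (ε * L)) * |a * L + b| :=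
            mul_le_mul_of_nonneg_right (sqrt_key hε hL) (abs_nonneg _)
  · -- ab ≥ a² : infimum 4√|ab|, attained at L = |b|/|a|, ε = √|a|/√|b|
    push_neg at h1 h2
    have hab0 : (0:ℝ) < a * b := lt_of_lt_of_le ha2 h2
    have hb : b ≠ 0 := by rintro rfl; simp at hab0
    have habs_ab : |a * b| = a * b := abs_of_pos hab0
    have hsa0 : 0 < Real.sqrt |a| := Real.sqrt_pos.mpr (abs_pos.mpr ha)
    have hsb0 : 0 < Real.sqrt |b| := Real.sqrt_pos.mpr (abs_pos.mpr hb)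
    set sa := Real.sqrt |a| with hsa
    set sb := Real.sqrt |b| with hsb
    have hsa2 : sa ^ 2 = |a| := Real.sq_sqrt (abs_nonneg a)
    have hsb2 : sb ^ 2 = |b| := Real.sq_sqrt (abs_nonneg b)
    have hba : |b| / |a| = b / a := by
      rw [← abs_div, abs_of_pos]
      have : b / a = (a * b) / a ^ 2 := by field_simp
      rw [this]; positivity
    have hale : |a| ≤ |b| := by
      have hh : |a| * |a| ≤ |a| * |b| := by
        have e1 : |a| * |b| = a * b := by rw [← abs_mul, habs_ab]
        have e2 : |a| * |a| = a * a := abs_mul_abs_self a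
        rw [e1, e2]; nlinarith
      exact le_of_mul_le_mul_left hh (abs_pos.mpr ha)
    apply IsLeast.isGLB
    constructor
    · refine ⟨sa / sb, |b| / |a|, div_pos hsa0 hsb0, ?_, ?_⟩
      · rw [le_div_iff₀ (abs_pos.mpr ha), one_mul]; exact hale
      · have hL : a * (|b| / |a|) + b = 2 * b := by
          rw [hba]; field_simp; ring
        rw [hL]
        have h2b : |2 * b| = 2 * sb ^ 2 := by rw [abs_mul, hsb2]; norm_num
        have hsab : Real.sqrt |a * b| = sa * sb := by
          rw [abs_mul, Real.sqrt_mul (abs_nonneg a)]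
        rw [h2b, hsab, ← hsa2, ← hsb2]
        field_simp
        ring
    · rintro v ⟨ε, L, hε, hL, rfl⟩
      have hL0 : (0:ℝ) < L := lt_of_lt_of_le one_pos hL
      have hs : Real.sqrt L ^ 2 = L := Real.sq_sqrt hL0.le
      have hs0 : 0 < Real.sqrt L := Real.sqrt_pos.mpr hL0
      have hr2 : Real.sqrt |a * b| ^ 2 = a * b := by
        rw [habs_ab] at *; exact Real.sq_sqrt hab0.le
      have hr0 : 0 ≤ Real.sqrt |a * b| := Real.sqrt_nonneg _
      have hsq : (2 * Real.sqrt |a * b| * Real.sqrt L) ^ 2 ≤ (a * L + b) ^ 2 := by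
        nlinarith [sq_nonneg (a * L - b)]
      have habs2 : 2 * Real.sqrt |a * b| * Real.sqrt L ≤ |a * L + b| :=
        abs_ge_of_sq (by positivity) hsq
      have hA : 4 * Real.sqrt |a * b| ≤ 2 / Real.sqrt L * |a * L + b| := by
        rw [div_mul_eq_mul_div, le_div_iff₀ hs0]
        nlinarith
      calc 4 * Real.sqrt |a * b| ≤ 2 / Real.sqrt L * |a * L + b| := hA
        _ ≤ (ε + 1 / (ε * L)) * |a * L + b| :=
            mul_le_mul_of_nonneg_right (sqrt_key hε hL) (abs_nonneg _)
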